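/- arXiv:1709.00582 — 2 statements merged into one kernel-verified Lean document; each statement's English description precedes it below -/
import Mathlib

section
/- Tilted moment generating function identity (discrete, finite-graph analogue of Theorem 1.2, equation (1.8)): for every external field H : V → [0,∞) and every function f : V → ℝ, E_{P_{J,H}}[ exp( ∑_{v∈V} f_v σ_v ) ] = E_{P̃_{J,0}}[ ∏_{C a cluster of ω̃} cosh( H(C) + f(C) ) ] / E_{P̃_{J,0}}[ ∏_{C a cluster of ω̃} cosh( H(C) ) ], where H(C) := ∑_{v∈C} H_v and f(C) := ∑_{v∈C} f_v. -/
open scoped Classical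

namespace FK

variable {V : Type*} [Fintype V] [DecidableEq V]

/-- Internal bond configurations on the edge set `E`. -/
abbrev Config (E : Finset (Sym2 V)) : Type _ := {e : Sym2 V // e ∈ E} → Bool

/-- Full bond configurations: internal edges together with the ghost edges
(one for each vertex). -/
abbrev GConfig (E : Finset (Sym2 V)) : Type _ := Config E × (V → Bool)

/-- Two vertices are adjacent if they are distinct and joined by an open internal edge. -/
def adj (E : Finset (Sym2 V)) (ω : Config E) (u v : V) : Prop :=
  u ≠ v ∧ ∃ h : s(u, v) ∈ E, ω ⟨s(u, v), h⟩ = true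

/-- The same-cluster relation of an internal configuration. -/
def conn (E : Finset (Sym2 V)) (ω : Config E) (u v : V) : Prop :=
  Relation.ReflTransGen (adj E ω) u v

/-- The cluster of a vertex. -/
noncomputable def cluster (E : Finset (Sym2 V)) (ω : Config E) (v : V) : Finset V :=
  Finset.univ.filter (fun u => conn E ω v u)

/-- The set of clusters (connected components) of an internal configuration. -/
noncomputable def clusters (E : Finset (Sym2 V)) (ω : Config E) : Finset (Finset V) :=
  Finset.univ.image (cluster E ω)

/-- Adjacency in the extended graph, where `none` is the ghost vertex `g`. -/
def adjG (E : Finset (Sym2 V)) (ω : GConfig E) : Option V → Option V → Prop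
  | some u, some v => adj E ω.1 u v
  | some u, none => ω.2 u = true
  | none, some v => ω.2 v = true
  | none, none => False

/-- Connectivity in the extended graph (with the ghost vertex `none`). -/
def connG (E : Finset (Sym2 V)) (ω : GConfig E) (x y : Option V) : Prop :=
  Relation.ReflTransGen (adjG E ω) x y

/-- Number of connected components of the extended graph not containing the ghost. -/
noncomputable def kGhost (E : Finset (Sym2 V)) (ω : GConfig E) : ℕ :=
  (((Finset.univ : Finset V).filter (fun v => ¬ connG E ω (some v) none)).image
    (fun v => Finset.univ.filter (fun u : V => connG E ω (some v) (some u)))).card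

/-- The product over internal edges of the usual FK edge weights. -/
noncomputable def edgeWeight (J : Sym2 V → ℝ) (E : Finset (Sym2 V)) (ω : Config E) : ℝ :=
  ∏ e : {e : Sym2 V // e ∈ E},
    if ω e then 1 - Real.exp (-2 * J e.1) else Real.exp (-2 * J e.1)

/-- Unnormalized FK (q = 2) weight with ghost. -/
noncomputable def fkWeight (J : Sym2 V → ℝ) (H : V → ℝ) (E : Finset (Sym2 V))
    (ω : GConfig E) : ℝ :=
  2 ^ kGhost E ω * edgeWeight J E ω.1 *
    ∏ v, if ω.2 v then 1 - Real.exp (-2 * H v) else Real.exp (-2 * H v)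

/-- The FK (q = 2) random-cluster measure with ghost. -/
noncomputable def fkProb (J : Sym2 V → ℝ) (H : V → ℝ) (E : Finset (Sym2 V))
    (ω : GConfig E) : ℝ :=
  fkWeight J H E ω / ∑ ω' : GConfig E, fkWeight J H E ω'

/-- The marginal of the FK measure with ghost on the internal edges. -/
noncomputable def fkMarginal (J : Sym2 V → ℝ) (H : V → ℝ) (E : Finset (Sym2 V))
    (ωi : Config E) : ℝ :=
  ∑ ωg : V → Bool, fkProb J H E (ωi, ωg)

/-- Unnormalized zero-field random-cluster (q = 2) weight. -/
noncomputable def rcWeight (J : Sym2 V → ℝ) (E : Finset (Sym2 V)) (ω : Config E) : ℝ :=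
  2 ^ (clusters E ω).card * edgeWeight J E ω

/-- The zero-field random-cluster (q = 2) measure. -/
noncomputable def rcProb (J : Sym2 V → ℝ) (E : Finset (Sym2 V)) (ω : Config E) : ℝ :=
  rcWeight J E ω / ∑ ω' : Config E, rcWeight J E ω'

/-- The spin value (±1) of a Boolean. -/
def spin (b : Bool) : ℝ := if b then 1 else -1

/-- The product of the two spins at the endpoints of an (unordered) edge. -/
def pairSpin (σ : V → Bool) : Sym2 V → ℝ :=
  Sym2.lift ⟨fun u v => spin (σ u) * spin (σ v), fun u v => mul_comm _ _⟩

/-- Unnormalized Ising weight. -/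
noncomputable def isingWeight (J : Sym2 V → ℝ) (H : V → ℝ) (E : Finset (Sym2 V))
    (σ : V → Bool) : ℝ :=
  Real.exp ((∑ e ∈ E, J e * pairSpin σ e) + ∑ v, H v * spin (σ v))

/-- The Ising Gibbs measure. -/
noncomputable def isingProb (J : Sym2 V → ℝ) (H : V → ℝ) (E : Finset (Sym2 V))
    (σ : V → Bool) : ℝ :=
  isingWeight J H E σ / ∑ σ' : V → Bool, isingWeight J H E σ'

/-- Unnormalized Edwards–Sokal weight on pairs (spin configuration, bond configuration
with ghost); the ghost spin is `+1` (i.e. `true`). -/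
noncomputable def esWeight (J : Sym2 V → ℝ) (H : V → ℝ) (E : Finset (Sym2 V))
    (p : (V → Bool) × GConfig E) : ℝ :=
  (∏ e : {e : Sym2 V // e ∈ E},
      if p.2.1 e then
        (if ∀ u ∈ e.1, ∀ v ∈ e.1, p.1 u = p.1 v then 1 - Real.exp (-2 * J e.1) else 0)
      else Real.exp (-2 * J e.1))
  * ∏ v, if p.2.2 v then (if p.1 v = true then 1 - Real.exp (-2 * H v) else 0)
         else Real.exp (-2 * H v)

/-- The Edwards–Sokal coupling measure. -/
noncomputable def esProb (J : Sym2 V → ℝ) (H : V → ℝ) (E : Finset (Sym2 V))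
    (p : (V → Bool) × GConfig E) : ℝ :=
  esWeight J H E p / ∑ p' : (V → Bool) × GConfig E, esWeight J H E p'

end FK

namespace FKAux
open FK Finset

variable {V : Type*} [Fintype V] [DecidableEq V]

lemma adj_symm (E : Finset (Sym2 V)) (ω : Config E) : Symmetric (adj E ω) := by
  rintro u v ⟨hne, he, hω⟩
  refine ⟨hne.symm, ?_⟩
  rw [Sym2.eq_swap]
  exact ⟨he, hω⟩

lemma conn_equivalence (E : Finset (Sym2 V)) (ω : Config E) : Equivalence (conn E ω) :=
  ⟨fun _ => Relation.ReflTransGen.refl,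
   fun h => (@Relation.ReflTransGen.stdSymm _ _ ⟨adj_symm E ω⟩).symm _ _ h,
   fun h1 h2 => h1.trans h2⟩

def connSetoid (E : Finset (Sym2 V)) (ω : Config E) : Setoid V :=
  ⟨conn E ω, conn_equivalence E ω⟩

noncomputable instance (E : Finset (Sym2 V)) (ω : Config E) :
    Fintype (Quotient (connSetoid E ω)) := Fintype.ofFinite _

noncomputable def fiber (E : Finset (Sym2 V)) (ω : Config E)
    (q : Quotient (connSetoid E ω)) : Finset V :=
  univ.filter (fun v => Quotient.mk (connSetoid E ω) v = q)

lemma fiber_mk (E : Finset (Sym2 V)) (ω : Config E) (v : V) :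
    fiber E ω (Quotient.mk (connSetoid E ω) v) = cluster E ω v := by
  ext u
  simp only [fiber, cluster, mem_filter, mem_univ, true_and, Quotient.eq]
  exact ⟨fun h => (conn_equivalence E ω).symm h, fun h => (conn_equivalence E ω).symm h⟩

lemma fiber_injective (E : Finset (Sym2 V)) (ω : Config E) :
    Function.Injective (fiber E ω) := by
  intro q q' h
  obtain ⟨v, rfl⟩ := Quotient.exists_rep q
  have hv : v ∈ fiber E ω q' := by
    rw [← h]
    simp only [fiber, Finset.mem_filter, Finset.mem_univ, true_and]
  have := (Finset.mem_filter.mp hv).2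
  exact this

lemma image_fiber (E : Finset (Sym2 V)) (ω : Config E) :
    univ.image (fiber E ω) = clusters E ω := by
  ext C
  simp only [clusters, mem_image, mem_univ, true_and]
  constructor
  · rintro ⟨q, rfl⟩
    obtain ⟨v, rfl⟩ := Quotient.exists_rep q
    exact ⟨v, (fiber_mk E ω v).symm⟩
  · rintro ⟨v, rfl⟩
    exact ⟨Quotient.mk (connSetoid E ω) v, fiber_mk E ω v⟩

lemma prod_clusters (E : Finset (Sym2 V)) (ω : Config E) (h : Finset V → ℝ) :
    ∏ C ∈ clusters E ω, h C = ∏ q : Quotient (connSetoid E ω), h (fiber E ω q) := by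
  rw [← image_fiber E ω, prod_image (fun q _ q' _ hqq' => fiber_injective E ω hqq')]

lemma card_clusters (E : Finset (Sym2 V)) (ω : Config E) :
    (clusters E ω).card = Fintype.card (Quotient (connSetoid E ω)) := by
  rw [← image_fiber E ω, card_image_of_injective _ (fiber_injective E ω), card_univ]

/-- Sum over compatible spin configurations. -/
lemma sum_compat (E : Finset (Sym2 V)) (ω : Config E) (g : V → ℝ) :
    ∑ σ ∈ univ.filter (fun σ : V → Bool => ∀ u v, conn E ω u v → σ u = σ v),
        Real.exp (∑ v, g v * spin (σ v))
      = 2 ^ (clusters E ω).card * ∏ C ∈ clusters E ω, Real.cosh (∑ v ∈ C, g v) := by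
  classical
  have himg : univ.filter (fun σ : V → Bool => ∀ u v, conn E ω u v → σ u = σ v)
      = univ.image (fun τ : Quotient (connSetoid E ω) → Bool =>
          (fun v => τ (Quotient.mk (connSetoid E ω) v))) := by
    ext σ
    simp only [mem_filter, mem_univ, true_and, mem_image]
    constructor
    · intro hc
      refine ⟨Quotient.lift σ (fun a b hab => hc a b hab), ?_⟩
      funext v; rfl
    · rintro ⟨τ, rfl⟩
      intro u v huv
      have : Quotient.mk (connSetoid E ω) u = Quotient.mk (connSetoid E ω) v :=
        Quotient.sound huv
      simp [this]
  have hinj : Function.Injective (fun τ : Quotient (connSetoid E ω) → Bool =>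
      (fun v => τ (Quotient.mk (connSetoid E ω) v) : V → Bool)) := by
    intro τ τ' h
    funext q
    obtain ⟨v, rfl⟩ := Quotient.exists_rep q
    exact congrFun h v
  rw [himg, sum_image (fun τ _ τ' _ h => hinj h)]
  have hterm : ∀ τ : Quotient (connSetoid E ω) → Bool,
      Real.exp (∑ v, g v * spin (τ (Quotient.mk (connSetoid E ω) v)))
        = ∏ q : Quotient (connSetoid E ω),
            Real.exp ((∑ v ∈ fiber E ω q, g v) * spin (τ q)) := by
    intro τ
    rw [← Real.exp_sum]
    congr 1
    rw [← Finset.sum_fiberwise (univ : Finset V)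
        (fun v => Quotient.mk (connSetoid E ω) v)
        (fun v => g v * spin (τ (Quotient.mk (connSetoid E ω) v)))]
    refine Finset.sum_congr rfl (fun q _ => ?_)
    rw [Finset.sum_mul]
    refine Finset.sum_congr rfl (fun v hv => ?_)
    have hq : Quotient.mk (connSetoid E ω) v = q := (Finset.mem_filter.mp hv).2
    rw [hq]
  calc ∑ τ : Quotient (connSetoid E ω) → Bool,
        Real.exp (∑ v, g v * spin (τ (Quotient.mk (connSetoid E ω) v)))
      = ∑ τ : Quotient (connSetoid E ω) → Bool, ∏ q,
          Real.exp ((∑ v ∈ fiber E ω q, g v) * spin (τ q)) := by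
        exact Finset.sum_congr rfl (fun τ _ => hterm τ)
    _ = ∏ q : Quotient (connSetoid E ω), ∑ b : Bool,
          Real.exp ((∑ v ∈ fiber E ω q, g v) * spin b) := by
        rw [Finset.prod_univ_sum]
        rw [← Fintype.piFinset_univ]
    _ = ∏ q : Quotient (connSetoid E ω),
          2 * Real.cosh (∑ v ∈ fiber E ω q, g v) := by
        refine Finset.prod_congr rfl (fun q _ => ?_)
        rw [Fintype.sum_bool]
        simp only [spin, if_pos, if_neg, Real.cosh_eq]
        norm_num
        ring
    _ = 2 ^ (clusters E ω).card * ∏ C ∈ clusters E ω, Real.cosh (∑ v ∈ C, g v) := by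
        rw [Finset.prod_mul_distrib, Finset.prod_const, card_univ, card_clusters E ω,
          prod_clusters E ω (fun C => Real.cosh (∑ v ∈ C, g v))]

lemma compat_iff (E : Finset (Sym2 V)) (ω : Config E) (σ : V → Bool) :
    (∀ (e : {e : Sym2 V // e ∈ E}), ω e = true → ∀ u ∈ e.1, ∀ v ∈ e.1, σ u = σ v)
      ↔ (∀ u v, conn E ω u v → σ u = σ v) := by
  constructor
  · intro hP u v huv
    induction huv with
    | refl => rfl
    | tail _hab hbc ih =>
        rename_i b c
        obtain ⟨hne, hmem, hopen⟩ := hbc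
        exact ih.trans (hP ⟨s(b, c), hmem⟩ hopen b (Sym2.mem_mk_left b c) c
          (Sym2.mem_mk_right b c))
  · intro hc e hopen u hu v hv
    by_cases huv : u = v
    · rw [huv]
    · have hedge : e.1 = s(u, v) := (Sym2.mem_and_mem_iff huv).mp ⟨hu, hv⟩
      refine hc u v (Relation.ReflTransGen.single ⟨huv, ?_⟩)
      refine ⟨hedge ▸ e.2, ?_⟩
      have : e = ⟨s(u, v), hedge ▸ e.2⟩ := Subtype.ext hedge
      rw [← this]; exact hopen

lemma prod_ind (E : Finset (Sym2 V)) (ω : Config E) (σ : V → Bool) :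
    (∏ e : {e : Sym2 V // e ∈ E},
        (if ω e then (if ∀ u ∈ e.1, ∀ v ∈ e.1, σ u = σ v then (1 : ℝ) else 0) else 1))
      = if ∀ u v, conn E ω u v → σ u = σ v then 1 else 0 := by
  have hmain : (∏ e : {e : Sym2 V // e ∈ E},
        (if ω e then (if ∀ u ∈ e.1, ∀ v ∈ e.1, σ u = σ v then (1 : ℝ) else 0) else 1))
      = if (∀ (e : {e : Sym2 V // e ∈ E}), ω e = true → ∀ u ∈ e.1, ∀ v ∈ e.1, σ u = σ v)
          then 1 else 0 := by
    by_cases hP : ∀ (e : {e : Sym2 V // e ∈ E}), ω e = true → ∀ u ∈ e.1, ∀ v ∈ e.1, σ u = σ v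
    · rw [if_pos hP]
      refine Finset.prod_eq_one (fun e _ => ?_)
      by_cases ho : ω e
      · rw [if_pos ho, if_pos (hP e ho)]
      · rw [if_neg ho]
    · rw [if_neg hP]
      push_neg at hP
      obtain ⟨e, hopen, u, hu, v, hv, hne⟩ := hP
      refine Finset.prod_eq_zero (Finset.mem_univ e) ?_
      rw [if_pos hopen, if_neg]
      push_neg
      exact ⟨u, hu, v, hv, hne⟩
  rw [hmain]
  exact if_congr (compat_iff E ω σ) rfl rfl

lemma exp_edge (J : Sym2 V → ℝ) (e : Sym2 V) (σ : V → Bool) :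
    Real.exp (J e * pairSpin σ e) =
      Real.exp (J e) *
        ((if ∀ u ∈ e, ∀ v ∈ e, σ u = σ v then 1 - Real.exp (-2 * J e) else 0)
          + Real.exp (-2 * J e)) := by
  induction e using Sym2.ind with
  | _ a b =>
    by_cases h : σ a = σ b
    · have hp : pairSpin σ s(a, b) = 1 := by
        simp only [pairSpin, Sym2.lift_mk, h]
        cases σ b <;> simp [spin]
      rw [hp, mul_one, if_pos]
      · ring
      · intro u hu v hv
        rcases Sym2.mem_iff.1 hu with rfl | rfl <;>
          rcases Sym2.mem_iff.1 hv with rfl | rfl <;>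
            first | rfl | exact h | exact h.symm
    · have hp : pairSpin σ s(a, b) = -1 := by
        simp only [pairSpin, Sym2.lift_mk]
        cases ha : σ a <;> cases hb : σ b <;> simp_all [spin]
      rw [hp, if_neg, zero_add, ← Real.exp_add]
      · ring_nf
      · intro hall
        exact h (hall a (Sym2.mem_mk_left a b) b (Sym2.mem_mk_right a b))

/-- The key Edwards–Sokal / FK expansion identity. -/
lemma key (E : Finset (Sym2 V)) (J : Sym2 V → ℝ) (g : V → ℝ) :
    ∑ σ : V → Bool, Real.exp ((∑ e ∈ E, J e * pairSpin σ e) + ∑ v, g v * spin (σ v))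
      = Real.exp (∑ e ∈ E, J e) *
          ∑ ω : Config E, rcWeight J E ω * ∏ C ∈ clusters E ω, Real.cosh (∑ v ∈ C, g v) := by
  classical
  have step1 : ∀ σ : V → Bool,
      Real.exp ((∑ e ∈ E, J e * pairSpin σ e) + ∑ v, g v * spin (σ v))
        = Real.exp (∑ e ∈ E, J e) *
            (∑ ω : Config E,
              (∏ e : {e : Sym2 V // e ∈ E},
                (if ω e then
                    (if ∀ u ∈ e.1, ∀ v ∈ e.1, σ u = σ v then 1 - Real.exp (-2 * J e.1) else 0)
                  else Real.exp (-2 * J e.1)))) *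
            Real.exp (∑ v, g v * spin (σ v)) := by
    intro σ
    rw [Real.exp_add]
    congr 1
    rw [Real.exp_sum]
    have : ∀ e ∈ E, Real.exp (J e * pairSpin σ e)
        = Real.exp (J e) *
          ((if ∀ u ∈ e, ∀ v ∈ e, σ u = σ v then 1 - Real.exp (-2 * J e) else 0)
            + Real.exp (-2 * J e)) := fun e _ => exp_edge J e σ
    rw [Finset.prod_congr rfl this, Finset.prod_mul_distrib, ← Real.exp_sum]
    congr 1
    rw [← Finset.prod_attach E (fun e =>
      (if ∀ u ∈ e, ∀ v ∈ e, σ u = σ v then 1 - Real.exp (-2 * J e) else 0)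
        + Real.exp (-2 * J e))]
    have hsum : ∀ e : {e : Sym2 V // e ∈ E},
        ((if ∀ u ∈ e.1, ∀ v ∈ e.1, σ u = σ v then 1 - Real.exp (-2 * J e.1) else 0)
          + Real.exp (-2 * J e.1))
        = ∑ b : Bool, (if b then
            (if ∀ u ∈ e.1, ∀ v ∈ e.1, σ u = σ v then 1 - Real.exp (-2 * J e.1) else 0)
          else Real.exp (-2 * J e.1)) := by
      intro e
      rw [Fintype.sum_bool]
      simp
    rw [Finset.prod_congr rfl (fun e _ => hsum e), ← Finset.univ_eq_attach,
      Finset.prod_univ_sum, Fintype.piFinset_univ]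
  rw [Finset.sum_congr rfl (fun σ _ => step1 σ)]
  have h2 : ∀ σ : V → Bool,
      Real.exp (∑ e ∈ E, J e) *
          (∑ ω : Config E,
            (∏ e : {e : Sym2 V // e ∈ E},
              (if ω e then
                  (if ∀ u ∈ e.1, ∀ v ∈ e.1, σ u = σ v then 1 - Real.exp (-2 * J e.1) else 0)
                else Real.exp (-2 * J e.1)))) *
          Real.exp (∑ v, g v * spin (σ v))
        = Real.exp (∑ e ∈ E, J e) *
            ∑ ω : Config E,
              (∏ e : {e : Sym2 V // e ∈ E},
                (if ω e then
                    (if ∀ u ∈ e.1, ∀ v ∈ e.1, σ u = σ v then 1 - Real.exp (-2 * J e.1) else 0)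
                  else Real.exp (-2 * J e.1)))
              * Real.exp (∑ v, g v * spin (σ v)) := by
    intro σ
    rw [mul_assoc, Finset.sum_mul]
  rw [Finset.sum_congr rfl (fun σ _ => h2 σ), ← Finset.mul_sum]
  congr 1
  rw [Finset.sum_comm]
  refine Finset.sum_congr rfl (fun ω _ => ?_)
  have hfac : ∀ σ : V → Bool,
      (∏ e : {e : Sym2 V // e ∈ E},
        (if ω e then
            (if ∀ u ∈ e.1, ∀ v ∈ e.1, σ u = σ v then 1 - Real.exp (-2 * J e.1) else 0)
          else Real.exp (-2 * J e.1)))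
      = edgeWeight J E ω * (if ∀ u v, conn E ω u v → σ u = σ v then 1 else 0) := by
    intro σ
    rw [← prod_ind E ω σ]
    unfold edgeWeight
    rw [← Finset.prod_mul_distrib]
    refine Finset.prod_congr rfl (fun e _ => ?_)
    by_cases ho : ω e
    · rw [if_pos ho, if_pos ho, if_pos ho]
      by_cases ha : ∀ u ∈ e.1, ∀ v ∈ e.1, σ u = σ v
      · rw [if_pos ha, if_pos ha, mul_one]
      · rw [if_neg ha, if_neg ha, mul_zero]
    · rw [if_neg ho, if_neg ho, if_neg ho, mul_one]
  calc ∑ σ : V → Bool,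
        (∏ e : {e : Sym2 V // e ∈ E},
          (if ω e then
              (if ∀ u ∈ e.1, ∀ v ∈ e.1, σ u = σ v then 1 - Real.exp (-2 * J e.1) else 0)
            else Real.exp (-2 * J e.1)))
          * Real.exp (∑ v, g v * spin (σ v))
      = edgeWeight J E ω * ∑ σ : V → Bool,
          (if ∀ u v, conn E ω u v → σ u = σ v then (1:ℝ) else 0)
            * Real.exp (∑ v, g v * spin (σ v)) := by
        rw [Finset.mul_sum]
        exact Finset.sum_congr rfl (fun σ _ => by rw [hfac σ, mul_assoc])
    _ = edgeWeight J E ω *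
          ∑ σ ∈ univ.filter (fun σ : V → Bool => ∀ u v, conn E ω u v → σ u = σ v),
            Real.exp (∑ v, g v * spin (σ v)) := by
        congr 1
        rw [Finset.sum_filter]
        exact Finset.sum_congr rfl (fun σ _ => by rw [ite_mul, one_mul, zero_mul])
    _ = edgeWeight J E ω *
          (2 ^ (clusters E ω).card * ∏ C ∈ clusters E ω, Real.cosh (∑ v ∈ C, g v)) := by
        rw [sum_compat E ω g]
    _ = rcWeight J E ω * ∏ C ∈ clusters E ω, Real.cosh (∑ v ∈ C, g v) := by
        unfold rcWeight; ring

end FKAux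

/-- tilted moment generating function identity. -/
theorem tilted_mgf_identity
    {V : Type*} [Fintype V] [DecidableEq V]
    (E : Finset (Sym2 V)) (hE : ∀ e ∈ E, ¬ e.IsDiag)
    (J : Sym2 V → ℝ) (hJ : ∀ e ∈ E, 0 ≤ J e)
    (H : V → ℝ) (hH : ∀ v, 0 ≤ H v) (f : V → ℝ) :
    (∑ σ : V → Bool, FK.isingProb J H E σ * Real.exp (∑ v, f v * FK.spin (σ v)))
      = (∑ ωi : FK.Config E, FK.rcProb J E ωi *
            ∏ C ∈ FK.clusters E ωi,
              Real.cosh ((∑ v ∈ C, H v) + ∑ v ∈ C, f v))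
        / ∑ ωi : FK.Config E, FK.rcProb J E ωi *
            ∏ C ∈ FK.clusters E ωi, Real.cosh (∑ v ∈ C, H v) := by
  classical
  set S : (V → ℝ) → ℝ := fun g => ∑ ωi : FK.Config E, FK.rcWeight J E ωi *
      ∏ C ∈ FK.clusters E ωi, Real.cosh (∑ v ∈ C, g v) with hSdef
  set Z' : ℝ := ∑ ωi : FK.Config E, FK.rcWeight J E ωi with hZ'def
  have hedge_nonneg : ∀ ωi : FK.Config E, 0 ≤ FK.edgeWeight J E ωi := by
    intro ωi
    refine Finset.prod_nonneg fun e _ => ?_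
    by_cases h : ωi e
    · rw [if_pos h]
      have h1 : Real.exp (-2 * J e.1) ≤ 1 := by
        rw [Real.exp_le_one_iff]
        nlinarith [hJ e.1 e.2]
      linarith
    · rw [if_neg h]; positivity
  have hedge_pos : 0 < FK.edgeWeight J E (fun _ => false) := by
    unfold FK.edgeWeight
    refine Finset.prod_pos fun e _ => ?_
    simp only [Bool.false_eq_true, if_false]
    positivity
  have hrc_nonneg : ∀ ωi : FK.Config E, 0 ≤ FK.rcWeight J E ωi := fun ωi =>
    mul_nonneg (by positivity) (hedge_nonneg ωi)
  have hrc_pos : 0 < FK.rcWeight J E (fun _ => false) :=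
    mul_pos (by positivity) hedge_pos
  have hSpos : ∀ g : V → ℝ, 0 < S g := by
    intro g
    simp only [hSdef]
    refine Finset.sum_pos' (fun ωi _ => mul_nonneg (hrc_nonneg ωi)
      (Finset.prod_nonneg fun C _ => (Real.cosh_pos _).le)) ?_
    exact ⟨fun _ => false, Finset.mem_univ _,
      mul_pos hrc_pos (Finset.prod_pos fun C _ => Real.cosh_pos _)⟩
  have hZ'pos : 0 < Z' := by
    simp only [hZ'def]
    exact Finset.sum_pos' (fun ωi _ => hrc_nonneg ωi) ⟨fun _ => false, Finset.mem_univ _, hrc_pos⟩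
  have h1 : (∑ σ : V → Bool, FK.isingWeight J H E σ * Real.exp (∑ v, f v * FK.spin (σ v)))
      = Real.exp (∑ e ∈ E, J e) * S (fun v => H v + f v) := by
    simp only [hSdef]
    rw [← FKAux.key E J (fun v => H v + f v)]
    refine Finset.sum_congr rfl fun σ _ => ?_
    unfold FK.isingWeight
    rw [← Real.exp_add]
    congr 1
    rw [add_assoc]
    congr 1
    rw [← Finset.sum_add_distrib]
    exact Finset.sum_congr rfl fun v _ => by ring
  have h2 : (∑ σ : V → Bool, FK.isingWeight J H E σ)
      = Real.exp (∑ e ∈ E, J e) * S H := by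
    simp only [hSdef]
    rw [← FKAux.key E J H]
    rfl
  have hL : (∑ σ : V → Bool, FK.isingProb J H E σ * Real.exp (∑ v, f v * FK.spin (σ v)))
      = (Real.exp (∑ e ∈ E, J e) * S (fun v => H v + f v))
          / (Real.exp (∑ e ∈ E, J e) * S H) := by
    rw [← h1, ← h2]
    unfold FK.isingProb
    rw [Finset.sum_div]
    exact Finset.sum_congr rfl fun σ _ => div_mul_eq_mul_div _ _ _
  have hR1 : (∑ ωi : FK.Config E, FK.rcProb J E ωi *
        ∏ C ∈ FK.clusters E ωi, Real.cosh ((∑ v ∈ C, H v) + ∑ v ∈ C, f v))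
      = S (fun v => H v + f v) / Z' := by
    simp only [hSdef, hZ'def]
    unfold FK.rcProb
    rw [Finset.sum_div]
    refine Finset.sum_congr rfl fun ωi _ => ?_
    rw [div_mul_eq_mul_div]
    have hcosh : ∀ C ∈ FK.clusters E ωi,
        Real.cosh ((∑ v ∈ C, H v) + ∑ v ∈ C, f v)
          = Real.cosh (∑ v ∈ C, (H v + f v)) := fun C _ => by
      rw [← Finset.sum_add_distrib]
    rw [Finset.prod_congr rfl hcosh]
  have hR2 : (∑ ωi : FK.Config E, FK.rcProb J E ωi *
        ∏ C ∈ FK.clusters E ωi, Real.cosh (∑ v ∈ C, H v))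
      = S H / Z' := by
    simp only [hSdef, hZ'def]
    unfold FK.rcProb
    rw [Finset.sum_div]
    exact Finset.sum_congr rfl fun ωi _ => div_mul_eq_mul_div _ _ _
  rw [hL, hR1, hR2]
  rw [mul_div_mul_left _ _ (Real.exp_ne_zero _)]
  rw [div_div_div_comm, div_self (ne_of_gt hZ'pos), div_one]
end

section
/- Moment generating function bound for the largest cluster in a magnetic field (finite-graph version of Proposition 3.6 and of the key inequality in the proof of Theorem 1.3): assume V ≠ ∅; then for every h ≥ 0 and t ≥ 0, taking constant external field H ≡ h, E_{P̃_{J,h}}[ exp( t · max_{C a cluster of ω̃} |C| ) ] ≤ 2 · E_{P_{J,0}}[ exp( (t+h) · ∑_{v∈V} σ_v ) ]. -/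
open scoped Classical

namespace FK

variable {V : Type*} [Fintype V] [DecidableEq V]

section Basic

variable (E : Finset (Sym2 V))

lemma adj_symm {ω : Config E} {u v : V} (h : adj E ω u v) : adj E ω v u := by
  obtain ⟨hne, he, hω⟩ := h
  refine ⟨hne.symm, ?_⟩
  rw [Sym2.eq_swap]
  exact ⟨he, hω⟩

lemma conn_symm {ω : Config E} {u v : V} (h : conn E ω u v) : conn E ω v u :=
  haveI : Std.Symm (adj E ω) := ⟨fun _ _ hab => adj_symm E hab⟩
  Relation.ReflTransGen.stdSymm.symm _ _ h

lemma mem_cluster {ω : Config E} {u v : V} : u ∈ cluster E ω v ↔ conn E ω v u := by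
  simp [cluster]

lemma self_mem_cluster {ω : Config E} (v : V) : v ∈ cluster E ω v :=
  mem_cluster E |>.2 .refl

lemma cluster_eq_of_conn {ω : Config E} {u v : V} (h : conn E ω u v) :
    cluster E ω u = cluster E ω v := by
  ext w
  simp only [mem_cluster]
  exact ⟨fun hw => (conn_symm E h).trans hw, fun hw => h.trans hw⟩

lemma adjG_symm {ω : GConfig E} {x y : Option V} (h : adjG E ω x y) : adjG E ω y x := by
  match x, y with
  | some u, some v => exact adj_symm E h
  | some u, none => exact h
  | none, some v => exact h
  | none, none => exact h.elim

lemma connG_symm {ω : GConfig E} {x y : Option V} (h : connG E ω x y) : connG E ω y x :=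
  haveI : Std.Symm (adjG E ω) := ⟨fun _ _ hab => adjG_symm E hab⟩
  Relation.ReflTransGen.stdSymm.symm _ _ h

lemma connG_of_conn {ω : GConfig E} {u v : V} (h : conn E ω.1 u v) :
    connG E ω (some u) (some v) :=
  Relation.ReflTransGen.lift (r := adj E ω.1) (p := adjG E ω) some (fun _ _ hab => hab) _ _ h

lemma conn_of_connG {ω : GConfig E} {v : V} (hv : ¬ connG E ω (some v) none)
    {y : Option V} (h : connG E ω (some v) y) : ∃ w, y = some w ∧ conn E ω.1 v w := by
  induction h with
  | refl => exact ⟨v, rfl, .refl⟩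
  | @tail b c hab hbc ih =>
    obtain ⟨w, rfl, hw⟩ := ih
    cases c with
    | none => exact absurd (hab.tail hbc) hv
    | some u => exact ⟨u, rfl, hw.tail hbc⟩

end Basic

end FK
namespace FK

set_option linter.unusedVariables false
set_option linter.unusedSectionVars false
set_option maxHeartbeats 1000000

variable {V : Type*} [Fintype V] [DecidableEq V]

section Compat

variable (E : Finset (Sym2 V))

/-- Local compatibility of a spin configuration with a bond configuration. -/
def compat (ω : GConfig E) (σ : V → Bool) : Prop :=
  (∀ e : {e : Sym2 V // e ∈ E}, ω.1 e = true → ∀ u ∈ e.1, ∀ v ∈ e.1, σ u = σ v) ∧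
  (∀ v, ω.2 v = true → σ v = true)

lemma compat_eq_of_connG {ω : GConfig E} {σ : V → Bool} (hc : compat E ω σ)
    {x y : Option V} (h : connG E ω x y) :
    x.elim true σ = y.elim true σ := by
  induction h with
  | refl => rfl
  | @tail b c hab hbc ih =>
    refine ih.trans ?_
    match b, c, hbc with
    | some u, some v, hbc =>
      obtain ⟨hne, he, hω⟩ := hbc
      exact hc.1 ⟨s(u, v), he⟩ hω u (Sym2.mem_mk_left u v) v (Sym2.mem_mk_right u v)
    | some u, none, hbc => exact hc.2 u hbc
    | none, some v, hbc => exact (hc.2 v hbc).symm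

lemma compat_true_of_ghost {ω : GConfig E} {σ : V → Bool} (hc : compat E ω σ)
    {v : V} (h : connG E ω (some v) none) : σ v = true :=
  compat_eq_of_connG E hc h

lemma compat_eq_of_conn {ω : GConfig E} {σ : V → Bool} (hc : compat E ω σ)
    {u v : V} (h : conn E ω.1 u v) : σ u = σ v :=
  compat_eq_of_connG E hc (connG_of_conn E h)

/-- Two distinct members of a `Sym2` determine it. -/
lemma sym2_eq_of_mem {z : Sym2 V} {u v : V} (hu : u ∈ z) (hv : v ∈ z) (hne : u ≠ v) :
    z = s(u, v) := by
  induction z using Sym2.ind with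
  | _ a b =>
    rw [Sym2.mem_iff] at hu hv
    rcases hu with rfl | rfl <;> rcases hv with rfl | rfl
    · exact absurd rfl hne
    · rfl
    · exact Sym2.eq_swap
    · exact absurd rfl hne

/-- A sufficient condition for compatibility: `σ` is constant along open internal
edges (expressed via `conn`) and `true` on ghost-connected vertices. -/
lemma compat_of_cluster_const {ω : GConfig E} {σ : V → Bool}
    (h1 : ∀ u v : V, adj E ω.1 u v → σ u = σ v)
    (h2 : ∀ v, ω.2 v = true → σ v = true) : compat E ω σ := by
  refine ⟨fun e hω u hu v hv => ?_, h2⟩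
  by_cases hne : u = v
  · rw [hne]
  · refine h1 u v ⟨hne, ?_⟩
    have he : s(u, v) ∈ E := by rw [← sym2_eq_of_mem hu hv hne]; exact e.2
    refine ⟨he, ?_⟩
    have : (⟨s(u, v), he⟩ : {e : Sym2 V // e ∈ E}) = e :=
      Subtype.ext (sym2_eq_of_mem hu hv hne).symm
    rw [this]; exact hω

/-- The extended component of a vertex. -/
noncomputable def extComp (ω : GConfig E) (v : V) : Finset V :=
  Finset.univ.filter (fun u : V => connG E ω (some v) (some u))

lemma extComp_eq_cluster {ω : GConfig E} {v : V} (hv : ¬ connG E ω (some v) none) :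
    extComp E ω v = cluster E ω.1 v := by
  ext u
  simp only [extComp, cluster, Finset.mem_filter, Finset.mem_univ, true_and]
  constructor
  · intro h
    obtain ⟨w, hw, hconn⟩ := conn_of_connG E hv h
    obtain rfl : w = u := by injection hw.symm
    exact hconn
  · exact fun h => connG_of_conn E h

/-- The set of extended components not containing the ghost. -/
noncomputable def NGset (ω : GConfig E) : Finset (Finset V) :=
  ((Finset.univ : Finset V).filter (fun v => ¬ connG E ω (some v) none)).image
    (fun v => Finset.univ.filter (fun u : V => connG E ω (some v) (some u)))

lemma kGhost_eq_card_NGset (ω : GConfig E) : kGhost E ω = (NGset E ω).card := rfl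

lemma extComp_mem_NGset {ω : GConfig E} {v : V} (hv : ¬ connG E ω (some v) none) :
    extComp E ω v ∈ NGset E ω :=
  Finset.mem_image_of_mem _ (Finset.mem_filter.2 ⟨Finset.mem_univ v, hv⟩)

lemma NGset_nonempty {ω : GConfig E} {C : Finset V} (hC : C ∈ NGset E ω) :
    ∃ v, v ∈ C ∧ ¬ connG E ω (some v) none ∧ extComp E ω v = C := by
  obtain ⟨v, hv, rfl⟩ := Finset.mem_image.1 hC
  have hv' := (Finset.mem_filter.1 hv).2
  exact ⟨v, Finset.mem_filter.2 ⟨Finset.mem_univ v, .refl⟩, hv', rfl⟩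

lemma mem_extComp {ω : GConfig E} {v u : V} :
    u ∈ extComp E ω v ↔ connG E ω (some v) (some u) := by
  simp [extComp]

end Compat

end FK
namespace FK

set_option linter.unusedVariables false
set_option linter.unusedSectionVars false
set_option maxHeartbeats 1000000

variable {V : Type*} [Fintype V] [DecidableEq V]

section Counting

variable (E : Finset (Sym2 V))

open Finset

/-- Upper bound: the number of compatible spin configurations is at most `2 ^ kGhost`. -/
lemma card_compat_le (ω : GConfig E) :
    (Finset.univ.filter (fun σ : V → Bool => compat E ω σ)).card ≤ 2 ^ kGhost E ω := by
  classical
  have hne : ∀ C : {C // C ∈ NGset E ω}, ∃ v, v ∈ C.1 ∧ ¬ connG E ω (some v) none ∧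
      extComp E ω v = C.1 := fun C => NGset_nonempty E C.2
  set rep : {C // C ∈ NGset E ω} → V := fun C => (hne C).choose with hrep
  set F : (V → Bool) → ({C // C ∈ NGset E ω} → Bool) := fun σ C => σ (rep C) with hF
  have hinj : Set.InjOn F (Finset.univ.filter (fun σ : V → Bool => compat E ω σ)) := by
    intro σ1 h1 σ2 h2 heq
    have hc1 : compat E ω σ1 := (Finset.mem_filter.1 h1).2
    have hc2 : compat E ω σ2 := (Finset.mem_filter.1 h2).2
    funext v
    by_cases hv : connG E ω (some v) none
    · rw [compat_true_of_ghost E hc1 hv, compat_true_of_ghost E hc2 hv]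
    · have hCm : extComp E ω v ∈ NGset E ω := extComp_mem_NGset E hv
      set C : {C // C ∈ NGset E ω} := ⟨extComp E ω v, hCm⟩ with hC
      have hr : rep C ∈ extComp E ω v := (hne C).choose_spec.1
      have hcn : connG E ω (some v) (some (rep C)) := (mem_extComp E).1 hr
      have e1 : σ1 v = σ1 (rep C) := compat_eq_of_connG E hc1 hcn
      have e2 : σ2 v = σ2 (rep C) := compat_eq_of_connG E hc2 hcn
      rw [e1, e2]
      exact congrFun heq C
  calc (Finset.univ.filter (fun σ : V → Bool => compat E ω σ)).card
      ≤ (Finset.univ : Finset ({C // C ∈ NGset E ω} → Bool)).card :=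
        Finset.card_le_card_of_injOn F (fun _ _ => Finset.mem_univ _) hinj
    _ = 2 ^ kGhost E ω := by
        rw [Finset.card_univ, Fintype.card_fun, Fintype.card_coe, Fintype.card_bool,
          kGhost_eq_card_NGset]

/-- Lower bound: twice the number of compatible configurations which are `+` on a given
cluster is at least `2 ^ kGhost`. -/
lemma card_compat_plus_ge (ω : GConfig E) {Cs : Finset V} (hCs : Cs ∈ clusters E ω.1) :
    2 ^ kGhost E ω ≤
      2 * (Finset.univ.filter (fun σ : V → Bool =>
        compat E ω σ ∧ ∀ v ∈ Cs, σ v = true)).card := by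
  classical
  obtain ⟨v₀, -, hv₀⟩ := Finset.mem_image.1 hCs
  set D : Finset (Finset V) := (NGset E ω).erase Cs with hD
  set ι : ({C // C ∈ D} → Bool) → (V → Bool) := fun f v =>
    if hv : ¬ connG E ω (some v) none ∧ extComp E ω v ∈ D then f ⟨extComp E ω v, hv.2⟩
    else true with hι
  -- ι f lands in the filter
  have hmem : ∀ f, compat E ω (ι f) ∧ ∀ v ∈ Cs, ι f v = true := by
    intro f
    constructor
    · refine compat_of_cluster_const E ?_ ?_
      · intro u v hadj
        have hconn : conn E ω.1 u v := Relation.ReflTransGen.single hadj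
        have hgu : connG E ω (some u) none ↔ connG E ω (some v) none := by
          constructor
          · exact fun hg => ((connG_of_conn E (conn_symm E hconn)).trans hg)
          · exact fun hg => ((connG_of_conn E hconn).trans hg)
        have hext : extComp E ω u = extComp E ω v := by
          ext w
          simp only [mem_extComp]
          constructor
          · exact fun hw => (connG_of_conn E (conn_symm E hconn)).trans hw
          · exact fun hw => (connG_of_conn E hconn).trans hw
        simp only [hι]
        by_cases h1 : ¬ connG E ω (some u) none ∧ extComp E ω u ∈ D
        · have h2 : ¬ connG E ω (some v) none ∧ extComp E ω v ∈ D :=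
            ⟨fun hg => h1.1 (hgu.2 hg), hext ▸ h1.2⟩
          rw [dif_pos h1, dif_pos h2]
          congr 1
          exact Subtype.ext hext
        · have h2 : ¬ (¬ connG E ω (some v) none ∧ extComp E ω v ∈ D) := by
            intro h2
            exact h1 ⟨fun hg => h2.1 (hgu.1 hg), hext ▸ h2.2⟩
          rw [dif_neg h1, dif_neg h2]
      · intro v hv
        have hg : connG E ω (some v) none := Relation.ReflTransGen.single hv
        simp only [hι]
        rw [dif_neg (by simp [hg])]
    · intro v hv
      have hconn : conn E ω.1 v₀ v := (mem_cluster E).1 (hv₀ ▸ hv)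
      simp only [hι]
      by_cases h1 : ¬ connG E ω (some v) none ∧ extComp E ω v ∈ D
      · exfalso
        have : extComp E ω v = Cs := by
          rw [extComp_eq_cluster E h1.1, cluster_eq_of_conn E (conn_symm E hconn), hv₀]
        exact (Finset.ne_of_mem_erase h1.2) this
      · rw [dif_neg h1]
  have hinj : Function.Injective
      (fun f : ({C // C ∈ D} → Bool) =>
        (⟨ι f, Finset.mem_filter.2 ⟨Finset.mem_univ _, hmem f⟩⟩ :
          {σ // σ ∈ Finset.univ.filter (fun σ : V → Bool =>
            compat E ω σ ∧ ∀ v ∈ Cs, σ v = true)})) := by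
    intro f g hfg
    have hfg' : ι f = ι g := congrArg Subtype.val hfg
    funext C
    have hCD : C.1 ∈ D := C.2
    obtain ⟨v, hvC, hvg, hvext⟩ := NGset_nonempty E (Finset.mem_of_mem_erase hCD)
    have h1 : ¬ connG E ω (some v) none ∧ extComp E ω v ∈ D := ⟨hvg, hvext ▸ hCD⟩
    have hf : ι f v = f C := by
      simp only [hι]
      rw [dif_pos h1]
      congr 1
      exact Subtype.ext hvext
    have hg : ι g v = g C := by
      simp only [hι]
      rw [dif_pos h1]
      congr 1
      exact Subtype.ext hvext
    rw [← hf, ← hg, hfg']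
  have hcard : 2 ^ D.card ≤ (Finset.univ.filter (fun σ : V → Bool =>
      compat E ω σ ∧ ∀ v ∈ Cs, σ v = true)).card := by
    have := Fintype.card_le_of_injective _ hinj
    rwa [Fintype.card_fun, Fintype.card_coe, Fintype.card_bool, Fintype.card_coe] at this
  have hDcard : kGhost E ω - 1 ≤ D.card := by
    rw [kGhost_eq_card_NGset]
    exact Finset.pred_card_le_card_erase
  calc 2 ^ kGhost E ω ≤ 2 * 2 ^ (kGhost E ω - 1) := by
        cases hk : kGhost E ω with
        | zero => norm_num
        | succ n => rw [Nat.succ_sub_one, pow_succ, mul_comm]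
    _ ≤ 2 * 2 ^ D.card := by
        exact Nat.mul_le_mul_left _ (Nat.pow_le_pow_right (by norm_num) hDcard)
    _ ≤ _ := Nat.mul_le_mul_left _ hcard

end Counting

end FK
namespace FK

set_option linter.unusedVariables false
set_option linter.unusedSectionVars false
set_option maxHeartbeats 1000000

variable {V : Type*} [Fintype V] [DecidableEq V]

section Weights

variable (E : Finset (Sym2 V))

/-- The ghost-edge part of the FK weight. -/
noncomputable def ghostProd (H : V → ℝ) (ωg : V → Bool) : ℝ :=
  ∏ v, if ωg v then 1 - Real.exp (-2 * H v) else Real.exp (-2 * H v)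

lemma fkWeight_eq (J : Sym2 V → ℝ) (H : V → ℝ) (ω : GConfig E) :
    fkWeight J H E ω = 2 ^ kGhost E ω * (edgeWeight J E ω.1 * ghostProd H ω.2) := by
  rw [fkWeight, ghostProd, mul_assoc]

lemma esWeight_eq (J : Sym2 V → ℝ) (H : V → ℝ) (σ : V → Bool) (ω : GConfig E) :
    esWeight J H E (σ, ω) =
      if compat E ω σ then edgeWeight J E ω.1 * ghostProd H ω.2 else 0 := by
  classical
  by_cases hc : compat E ω σ
  · rw [if_pos hc, esWeight, edgeWeight, ghostProd]
    congr 1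
    · refine Finset.prod_congr rfl fun e _ => ?_
      by_cases hω : ω.1 e = true
      · simp only [hω, if_true, if_pos (hc.1 e hω)]
      · simp only [Bool.not_eq_true] at hω
        simp [hω]
    · refine Finset.prod_congr rfl fun v _ => ?_
      by_cases hω : ω.2 v = true
      · simp only [hω, if_true, if_pos (hc.2 v hω)]
      · simp only [Bool.not_eq_true] at hω
        simp [hω]
  · rw [if_neg hc, esWeight]
    rcases not_and_or.1 hc with hc1 | hc2
    · push_neg at hc1
      obtain ⟨e, hω, u, hu, v, hv, huv⟩ := hc1
      apply mul_eq_zero_of_left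
      refine Finset.prod_eq_zero (Finset.mem_univ e) ?_
      rw [hω]
      simp only [if_true]
      rw [if_neg]
      push_neg
      exact ⟨u, hu, v, hv, huv⟩
    · push_neg at hc2
      obtain ⟨v, hω, hv⟩ := hc2
      apply mul_eq_zero_of_right
      refine Finset.prod_eq_zero (Finset.mem_univ v) ?_
      rw [hω]
      simp only [if_true]
      rw [if_neg hv]

lemma edgeWeight_nonneg {J : Sym2 V → ℝ} (hJ : ∀ e ∈ E, 0 ≤ J e) (ωi : Config E) :
    0 ≤ edgeWeight J E ωi := by
  refine Finset.prod_nonneg fun e _ => ?_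
  split_ifs with hω
  · have : Real.exp (-2 * J e.1) ≤ 1 := by
      apply Real.exp_le_one_iff.2
      have := hJ e.1 e.2
      nlinarith
    linarith
  · exact (Real.exp_nonneg _)

lemma ghostProd_nonneg {H : V → ℝ} (hH : ∀ v, 0 ≤ H v) (ωg : V → Bool) :
    0 ≤ ghostProd H ωg := by
  refine Finset.prod_nonneg fun v _ => ?_
  split_ifs with hω
  · have : Real.exp (-2 * H v) ≤ 1 := by
      apply Real.exp_le_one_iff.2
      have := hH v
      nlinarith
    linarith
  · exact (Real.exp_nonneg _)

/-- Summing the ES weight over spins gives `W` times the number of compatible spins. -/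
lemma sum_esWeight (J : Sym2 V → ℝ) (H : V → ℝ) (ω : GConfig E) :
    ∑ σ : V → Bool, esWeight J H E (σ, ω) =
      ((Finset.univ.filter (fun σ : V → Bool => compat E ω σ)).card : ℝ) *
        (edgeWeight J E ω.1 * ghostProd H ω.2) := by
  classical
  simp_rw [esWeight_eq]
  rw [Finset.sum_ite, Finset.sum_const, Finset.sum_const_zero, add_zero, nsmul_eq_mul]

end Weights

end FK
namespace FK

set_option linter.unusedVariables false
set_option linter.unusedSectionVars false
set_option maxHeartbeats 1000000

variable {V : Type*} [Fintype V] [DecidableEq V]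

section Flip

variable (E : Finset (Sym2 V))

/-- Sign-flip outside of the distinguished cluster and the ghost component. -/
noncomputable def flip (ω : GConfig E) (Cs : Finset V) (σ : V → Bool) : V → Bool :=
  fun v => if v ∈ Cs ∨ connG E ω (some v) none then σ v else !(σ v)

lemma flip_flip (ω : GConfig E) (Cs : Finset V) (σ : V → Bool) :
    flip E ω Cs (flip E ω Cs σ) = σ := by
  funext v
  by_cases hv : v ∈ Cs ∨ connG E ω (some v) none <;> simp [flip, hv]

lemma flip_mem (ω : GConfig E) {Cs : Finset V} (hCs : Cs ∈ clusters E ω.1)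
    {σ : V → Bool} (hc : compat E ω σ) (hplus : ∀ v ∈ Cs, σ v = true) :
    compat E ω (flip E ω Cs σ) ∧ ∀ v ∈ Cs, flip E ω Cs σ v = true := by
  obtain ⟨v₀, -, hv₀⟩ := Finset.mem_image.1 hCs
  have memCs : ∀ u v : V, conn E ω.1 u v → (u ∈ Cs ↔ v ∈ Cs) := by
    intro u v h
    rw [← hv₀]
    simp only [mem_cluster]
    exact ⟨fun hw => hw.trans h, fun hw => hw.trans (conn_symm E h)⟩
  have memG : ∀ u v : V, conn E ω.1 u v →
      (connG E ω (some u) none ↔ connG E ω (some v) none) :=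
    fun u v h => ⟨fun hg => (connG_of_conn E (conn_symm E h)).trans hg,
                  fun hg => (connG_of_conn E h).trans hg⟩
  constructor
  · refine compat_of_cluster_const E ?_ ?_
    · intro u v hadj
      have hconn : conn E ω.1 u v := Relation.ReflTransGen.single hadj
      have hσ : σ u = σ v := compat_eq_of_conn E hc hconn
      have hcond : (u ∈ Cs ∨ connG E ω (some u) none) ↔
          (v ∈ Cs ∨ connG E ω (some v) none) :=
        or_congr (memCs u v hconn) (memG u v hconn)
      by_cases h1 : u ∈ Cs ∨ connG E ω (some u) none
      · rw [flip, flip, if_pos h1, if_pos (hcond.1 h1), hσ]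
      · rw [flip, flip, if_neg h1, if_neg (fun h2 => h1 (hcond.2 h2)), hσ]
    · intro v hv
      have hg : connG E ω (some v) none := Relation.ReflTransGen.single hv
      rw [flip, if_pos (Or.inr hg)]
      exact hc.2 v hv
  · intro v hv
    rw [flip, if_pos (Or.inl hv)]
    exact hplus v hv

lemma spin_sum_flip (ω : GConfig E) {Cs : Finset V} (hCs : Cs ∈ clusters E ω.1)
    {σ : V → Bool} (hc : compat E ω σ) (hplus : ∀ v ∈ Cs, σ v = true) :
    2 * (Cs.card : ℝ) ≤ (∑ v, spin (σ v)) + ∑ v, spin (flip E ω Cs σ v) := by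
  have key : ∀ v, spin (σ v) + spin (flip E ω Cs σ v) =
      if v ∈ Cs ∨ connG E ω (some v) none then 2 else 0 := by
    intro v
    by_cases hv : v ∈ Cs ∨ connG E ω (some v) none
    · rw [if_pos hv, flip, if_pos hv]
      have hσ : σ v = true := by
        rcases hv with hv | hv
        · exact hplus v hv
        · exact compat_true_of_ghost E hc hv
      rw [hσ]; norm_num [spin]
    · rw [if_neg hv, flip, if_neg hv]
      cases hσ : σ v <;> simp [spin, hσ]
  rw [← Finset.sum_add_distrib]
  calc 2 * (Cs.card : ℝ) = ∑ v, (if v ∈ Cs then (2 : ℝ) else 0) := by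
        rw [Finset.sum_ite_mem, Finset.univ_inter, Finset.sum_const, nsmul_eq_mul, mul_comm]
    _ ≤ ∑ v, (if v ∈ Cs ∨ connG E ω (some v) none then (2:ℝ) else 0) := by
        refine Finset.sum_le_sum fun v _ => ?_
        by_cases hv : v ∈ Cs
        · rw [if_pos hv, if_pos (Or.inl hv)]
        · rw [if_neg hv]
          split_ifs <;> norm_num
    _ = _ := by
        refine Finset.sum_congr rfl fun v _ => ?_
        rw [key v]

/-- The core inequality: the sum of `exp(t · magnetization)` over compatible spin
configurations which are `+` on the cluster `Cs` dominates `card · exp(t |Cs|)`. -/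
lemma sum_exp_ge (ω : GConfig E) {Cs : Finset V} (hCs : Cs ∈ clusters E ω.1)
    {t : ℝ} (ht : 0 ≤ t) :
    ((Finset.univ.filter (fun σ : V → Bool =>
        compat E ω σ ∧ ∀ v ∈ Cs, σ v = true)).card : ℝ) * Real.exp (t * Cs.card) ≤
      ∑ σ ∈ Finset.univ.filter (fun σ : V → Bool =>
        compat E ω σ ∧ ∀ v ∈ Cs, σ v = true), Real.exp (t * ∑ v, spin (σ v)) := by
  classical
  set Sp := Finset.univ.filter (fun σ : V → Bool =>
    compat E ω σ ∧ ∀ v ∈ Cs, σ v = true) with hSp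
  have hmem : ∀ σ ∈ Sp, flip E ω Cs σ ∈ Sp := by
    intro σ hσ
    have hm := Finset.mem_filter.1 hσ
    exact Finset.mem_filter.2 ⟨Finset.mem_univ _, flip_mem E ω hCs hm.2.1 hm.2.2⟩
  have hrefl : ∑ σ ∈ Sp, Real.exp (t * ∑ v, spin (flip E ω Cs σ v)) =
      ∑ σ ∈ Sp, Real.exp (t * ∑ v, spin (σ v)) := by
    refine Finset.sum_nbij' (fun σ => flip E ω Cs σ) (fun σ => flip E ω Cs σ)
      hmem hmem (fun σ _ => flip_flip E ω Cs σ) (fun σ _ => flip_flip E ω Cs σ)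
      (fun σ _ => rfl)
  have pair : ∀ σ ∈ Sp, 2 * Real.exp (t * Cs.card) ≤
      Real.exp (t * ∑ v, spin (σ v)) + Real.exp (t * ∑ v, spin (flip E ω Cs σ v)) := by
    intro σ hσ
    have hc : compat E ω σ := (Finset.mem_filter.1 hσ).2.1
    have hplus : ∀ v ∈ Cs, σ v = true := (Finset.mem_filter.1 hσ).2.2
    set a := t * ∑ v, spin (σ v)
    set b := t * ∑ v, spin (flip E ω Cs σ v)
    have hab : 2 * (t * Cs.card) ≤ a + b := by
      have := spin_sum_flip E ω hCs hc hplus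
      calc 2 * (t * Cs.card) = t * (2 * Cs.card) := by ring
        _ ≤ t * ((∑ v, spin (σ v)) + ∑ v, spin (flip E ω Cs σ v)) :=
            mul_le_mul_of_nonneg_left this ht
        _ = a + b := by ring
    have h1 : Real.exp (a/2) * Real.exp (a/2) = Real.exp a := by
      rw [← Real.exp_add]; ring_nf
    have h2 : Real.exp (b/2) * Real.exp (b/2) = Real.exp b := by
      rw [← Real.exp_add]; ring_nf
    have h3 : Real.exp (a/2) * Real.exp (b/2) = Real.exp ((a+b)/2) := by
      rw [← Real.exp_add]; ring_nf
    have h4 : Real.exp (t * Cs.card) ≤ Real.exp ((a+b)/2) := by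
      apply Real.exp_le_exp.2; linarith
    nlinarith [sq_nonneg (Real.exp (a/2) - Real.exp (b/2)), Real.exp_pos (t * Cs.card),
      Real.exp_pos ((a+b)/2)]
  have h2sum : 2 * ((Sp.card : ℝ) * Real.exp (t * Cs.card)) ≤
      2 * ∑ σ ∈ Sp, Real.exp (t * ∑ v, spin (σ v)) := by
    calc 2 * ((Sp.card : ℝ) * Real.exp (t * Cs.card))
        = ∑ σ ∈ Sp, 2 * Real.exp (t * Cs.card) := by
          rw [Finset.sum_const, nsmul_eq_mul]; ring
      _ ≤ ∑ σ ∈ Sp, (Real.exp (t * ∑ v, spin (σ v)) +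
            Real.exp (t * ∑ v, spin (flip E ω Cs σ v))) :=
          Finset.sum_le_sum pair
      _ = 2 * ∑ σ ∈ Sp, Real.exp (t * ∑ v, spin (σ v)) := by
          rw [Finset.sum_add_distrib, hrefl]; ring
  linarith

end Flip

end FK
namespace FK

set_option linter.unusedVariables false
set_option linter.unusedSectionVars false
set_option maxHeartbeats 1000000

variable {V : Type*} [Fintype V] [DecidableEq V]

section Key

variable (E : Finset (Sym2 V))

lemma sum_esWeight_le_fkWeight {J : Sym2 V → ℝ} (hJ : ∀ e ∈ E, 0 ≤ J e)
    {H : V → ℝ} (hH : ∀ v, 0 ≤ H v) (ω : GConfig E) :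
    ∑ σ : V → Bool, esWeight J H E (σ, ω) ≤ fkWeight J H E ω := by
  rw [sum_esWeight, fkWeight_eq]
  have hW : 0 ≤ edgeWeight J E ω.1 * ghostProd H ω.2 :=
    mul_nonneg (edgeWeight_nonneg E hJ ω.1) (ghostProd_nonneg hH ω.2)
  have hcard := card_compat_le E ω
  calc ((Finset.univ.filter (fun σ : V → Bool => compat E ω σ)).card : ℝ) *
        (edgeWeight J E ω.1 * ghostProd H ω.2)
      ≤ (2 ^ kGhost E ω : ℝ) * (edgeWeight J E ω.1 * ghostProd H ω.2) := by
        apply mul_le_mul_of_nonneg_right _ hW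
        exact_mod_cast hcard
    _ = _ := by norm_num

lemma fkWeight_nonneg {J : Sym2 V → ℝ} (hJ : ∀ e ∈ E, 0 ≤ J e)
    {H : V → ℝ} (hH : ∀ v, 0 ≤ H v) (ω : GConfig E) :
    0 ≤ fkWeight J H E ω := by
  rw [fkWeight_eq]
  have hW : 0 ≤ edgeWeight J E ω.1 * ghostProd H ω.2 :=
    mul_nonneg (edgeWeight_nonneg E hJ ω.1) (ghostProd_nonneg hH ω.2)
  positivity

/-- The key pointwise inequality between the FK weight times `exp(t · largest cluster)`
and the spin-summed ES weight. -/
lemma key_ineq [Nonempty V] {J : Sym2 V → ℝ} (hJ : ∀ e ∈ E, 0 ≤ J e)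
    {H : V → ℝ} (hH : ∀ v, 0 ≤ H v) {t : ℝ} (ht : 0 ≤ t) (ω : GConfig E) :
    fkWeight J H E ω * Real.exp (t * (((clusters E ω.1).sup Finset.card : ℕ) : ℝ)) ≤
      2 * ∑ σ : V → Bool, esWeight J H E (σ, ω) * Real.exp (t * ∑ v, spin (σ v)) := by
  classical
  have hne : (clusters E ω.1).Nonempty :=
    Finset.Nonempty.image Finset.univ_nonempty _
  obtain ⟨Cs, hCs, hsup⟩ := Finset.exists_mem_eq_sup _ hne Finset.card
  rw [hsup]
  set W := edgeWeight J E ω.1 * ghostProd H ω.2 with hWdef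
  have hW : 0 ≤ W :=
    mul_nonneg (edgeWeight_nonneg E hJ ω.1) (ghostProd_nonneg hH ω.2)
  set Sp := Finset.univ.filter (fun σ : V → Bool =>
    compat E ω σ ∧ ∀ v ∈ Cs, σ v = true) with hSpdef
  -- rewrite the RHS sum
  have hsum : ∑ σ : V → Bool, esWeight J H E (σ, ω) * Real.exp (t * ∑ v, spin (σ v)) =
      ∑ σ ∈ Finset.univ.filter (fun σ : V → Bool => compat E ω σ),
        W * Real.exp (t * ∑ v, spin (σ v)) := by
    rw [Finset.sum_filter]
    refine Finset.sum_congr rfl fun σ _ => ?_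
    rw [esWeight_eq]
    split_ifs <;> simp [hWdef]
  have hsub : Sp ⊆ Finset.univ.filter (fun σ : V → Bool => compat E ω σ) := by
    intro σ hσ
    have := Finset.mem_filter.1 hσ
    exact Finset.mem_filter.2 ⟨this.1, this.2.1⟩
  have h1 : ∑ σ ∈ Sp, W * Real.exp (t * ∑ v, spin (σ v)) ≤
      ∑ σ ∈ Finset.univ.filter (fun σ : V → Bool => compat E ω σ),
        W * Real.exp (t * ∑ v, spin (σ v)) := by
    refine Finset.sum_le_sum_of_subset_of_nonneg hsub fun σ _ _ => ?_
    exact mul_nonneg hW (Real.exp_nonneg _)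
  have h2 : (Sp.card : ℝ) * Real.exp (t * Cs.card) ≤
      ∑ σ ∈ Sp, Real.exp (t * ∑ v, spin (σ v)) := sum_exp_ge E ω hCs ht
  have h3 : (2 : ℝ) ^ kGhost E ω ≤ 2 * Sp.card := by
    exact_mod_cast card_compat_plus_ge E ω hCs
  have hexp : (0:ℝ) < Real.exp (t * Cs.card) := Real.exp_pos _
  have hfk : fkWeight J H E ω = 2 ^ kGhost E ω * W := fkWeight_eq E J H ω
  rw [hfk, hsum]
  have hWsum : ∑ σ ∈ Sp, W * Real.exp (t * ∑ v, spin (σ v)) =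
      W * ∑ σ ∈ Sp, Real.exp (t * ∑ v, spin (σ v)) := by
    rw [Finset.mul_sum]
  calc (2:ℝ) ^ kGhost E ω * W * Real.exp (t * Cs.card)
      ≤ (2 * Sp.card) * W * Real.exp (t * Cs.card) := by
        apply mul_le_mul_of_nonneg_right _ hexp.le
        exact mul_le_mul_of_nonneg_right h3 hW
    _ = 2 * (W * ((Sp.card : ℝ) * Real.exp (t * Cs.card))) := by ring
    _ ≤ 2 * (W * ∑ σ ∈ Sp, Real.exp (t * ∑ v, spin (σ v))) := by
        apply mul_le_mul_of_nonneg_left _ (by norm_num)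
        exact mul_le_mul_of_nonneg_left h2 hW
    _ = 2 * ∑ σ ∈ Sp, W * Real.exp (t * ∑ v, spin (σ v)) := by rw [Finset.mul_sum]
    _ ≤ _ := by
        apply mul_le_mul_of_nonneg_left h1 (by norm_num)

end Key

end FK
namespace FK

set_option linter.unusedVariables false
set_option linter.unusedSectionVars false
set_option maxHeartbeats 1000000

variable {V : Type*} [Fintype V] [DecidableEq V]

section Ising

variable (E : Finset (Sym2 V))

lemma spin_not (b : Bool) : spin (!b) = -spin b := by
  cases b <;> norm_num [spin]

lemma sum_prod_bool {ι : Type*} [Fintype ι] [DecidableEq ι] (A B : ι → ℝ) :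
    (∑ x : ι → Bool, ∏ i, if x i then A i else B i) = ∏ i, (A i + B i) := by
  have h := Fintype.prod_sum (fun (i : ι) (b : Bool) => if b then A i else B i)
  have h2 : (∏ i, ∑ b : Bool, if b then A i else B i) = ∏ i, (A i + B i) :=
    Finset.prod_congr rfl fun i _ => by simp
  rw [h2] at h
  exact h.symm

lemma edge_factor (σ : V → Bool) (c : ℝ) (z : Sym2 V) :
    ((if ∀ u ∈ z, ∀ v ∈ z, σ u = σ v then 1 - Real.exp (-2 * c) else 0) +
      Real.exp (-2 * c)) = Real.exp (c * pairSpin σ z - c) := by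
  induction z using Sym2.ind with
  | _ a b =>
    have hp : pairSpin σ s(a, b) = spin (σ a) * spin (σ b) := rfl
    by_cases hab : σ a = σ b
    · have hcond : ∀ u ∈ s(a, b), ∀ v ∈ s(a, b), σ u = σ v := by
        intro u hu v hv
        rw [Sym2.mem_iff] at hu hv
        rcases hu with rfl | rfl <;> rcases hv with rfl | rfl <;>
          first | rfl | exact hab | exact hab.symm
      have hone : spin (σ a) * spin (σ b) = 1 := by
        rw [← hab]; cases h : σ a <;> norm_num [spin]
      rw [if_pos hcond, hp, hone]
      have h0 : c * 1 - c = 0 := by ring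
      rw [h0, Real.exp_zero]
      ring
    · have hcond : ¬ ∀ u ∈ s(a, b), ∀ v ∈ s(a, b), σ u = σ v := fun hcond =>
        hab (hcond a (Sym2.mem_mk_left a b) b (Sym2.mem_mk_right a b))
      have hmone : spin (σ a) * spin (σ b) = -1 := by
        cases ha : σ a <;> cases hb : σ b <;> simp_all [spin]
      rw [if_neg hcond, hp, hmone]
      have h0 : c * (-1) - c = -2 * c := by ring
      rw [h0, zero_add]

lemma vertex_factor (σ : V → Bool) (c : ℝ) (v : V) :
    ((if σ v = true then 1 - Real.exp (-2 * c) else 0) + Real.exp (-2 * c)) =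
      Real.exp (c * spin (σ v) - c) := by
  cases h : σ v
  · rw [if_neg (by simp), zero_add,
      show c * spin false - c = -2 * c by simp [spin]; ring]
  · rw [if_pos rfl]
    have h0 : c * spin true - c = 0 := by norm_num [spin]
    rw [h0, Real.exp_zero]
    ring

/-- Summing the ES weight over bond configurations gives the Ising weight. -/
lemma sum_esWeight_bonds (J : Sym2 V → ℝ) (H : V → ℝ) (σ : V → Bool) :
    ∑ ω : GConfig E, esWeight J H E (σ, ω) =
      Real.exp (-(∑ e ∈ E, J e) - ∑ v, H v) * isingWeight J H E σ := by
  classical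
  have hsplit : ∑ ω : GConfig E, esWeight J H E (σ, ω) =
      (∑ ωi : Config E, ∏ e : {e : Sym2 V // e ∈ E},
        if ωi e then
          (if ∀ u ∈ e.1, ∀ v ∈ e.1, σ u = σ v then 1 - Real.exp (-2 * J e.1) else 0)
        else Real.exp (-2 * J e.1)) *
      (∑ ωg : V → Bool, ∏ v, if ωg v then
          (if σ v = true then 1 - Real.exp (-2 * H v) else 0)
        else Real.exp (-2 * H v)) := by
    rw [Finset.sum_mul_sum, Fintype.sum_prod_type]
    rfl
  rw [hsplit]
  have h1 : (∑ ωi : Config E, ∏ e : {e : Sym2 V // e ∈ E},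
      if ωi e then
        (if ∀ u ∈ e.1, ∀ v ∈ e.1, σ u = σ v then 1 - Real.exp (-2 * J e.1) else 0)
      else Real.exp (-2 * J e.1)) =
      Real.exp (∑ e ∈ E, (J e * pairSpin σ e - J e)) := by
    calc (∑ ωi : Config E, ∏ e : {e : Sym2 V // e ∈ E},
        if ωi e then
          (if ∀ u ∈ e.1, ∀ v ∈ e.1, σ u = σ v then 1 - Real.exp (-2 * J e.1) else 0)
        else Real.exp (-2 * J e.1))
        = ∏ e : {e : Sym2 V // e ∈ E},
            ((if ∀ u ∈ e.1, ∀ v ∈ e.1, σ u = σ v then 1 - Real.exp (-2 * J e.1) else 0) +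
              Real.exp (-2 * J e.1)) :=
          sum_prod_bool _ _
      _ = ∏ e : {e : Sym2 V // e ∈ E}, Real.exp (J e.1 * pairSpin σ e.1 - J e.1) :=
          Finset.prod_congr rfl fun e _ => edge_factor σ (J e.1) e.1
      _ = Real.exp (∑ e : {e : Sym2 V // e ∈ E}, (J e.1 * pairSpin σ e.1 - J e.1)) :=
          (Real.exp_sum _ _).symm
      _ = Real.exp (∑ e ∈ E, (J e * pairSpin σ e - J e)) := by
          rw [Finset.sum_coe_sort E (fun z => J z * pairSpin σ z - J z)]
  have h2 : (∑ ωg : V → Bool, ∏ v, if ωg v then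
      (if σ v = true then 1 - Real.exp (-2 * H v) else 0)
    else Real.exp (-2 * H v)) = Real.exp (∑ v, (H v * spin (σ v) - H v)) := by
    calc (∑ ωg : V → Bool, ∏ v, if ωg v then
          (if σ v = true then 1 - Real.exp (-2 * H v) else 0)
        else Real.exp (-2 * H v))
        = ∏ v, ((if σ v = true then 1 - Real.exp (-2 * H v) else 0) +
            Real.exp (-2 * H v)) := sum_prod_bool _ _
      _ = ∏ v, Real.exp (H v * spin (σ v) - H v) :=
          Finset.prod_congr rfl fun v _ => vertex_factor σ (H v) v
      _ = Real.exp (∑ v, (H v * spin (σ v) - H v)) := (Real.exp_sum _ _).symm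
  rw [h1, h2, isingWeight, ← Real.exp_add, ← Real.exp_add]
  congr 1
  rw [Finset.sum_sub_distrib, Finset.sum_sub_distrib]
  ring

lemma isingWeight_field (J : Sym2 V → ℝ) (h : ℝ) (σ : V → Bool) :
    isingWeight J (fun _ => h) E σ =
      isingWeight J (fun _ => 0) E σ * Real.exp (h * ∑ v, spin (σ v)) := by
  rw [isingWeight, isingWeight, ← Real.exp_add]
  congr 1
  rw [Finset.mul_sum]
  simp

lemma isingWeight_pos (J : Sym2 V → ℝ) (H : V → ℝ) (σ : V → Bool) :
    0 < isingWeight J H E σ := Real.exp_pos _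

lemma isingWeight_neg_invariant (J : Sym2 V → ℝ) (σ : V → Bool) :
    isingWeight J (fun _ => 0) E (fun v => !(σ v)) = isingWeight J (fun _ => 0) E σ := by
  rw [isingWeight, isingWeight]
  congr 1
  have hpair : ∀ z : Sym2 V, pairSpin (fun v => !(σ v)) z = pairSpin σ z := by
    intro z
    induction z using Sym2.ind with
    | _ a b =>
      show spin (!(σ a)) * spin (!(σ b)) = spin (σ a) * spin (σ b)
      rw [spin_not, spin_not]
      ring
  simp [hpair]

lemma spin_sum_neg (σ : V → Bool) :
    (∑ v, spin (!(σ v))) = -∑ v, spin (σ v) := by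
  rw [← Finset.sum_neg_distrib]
  exact Finset.sum_congr rfl fun v _ => spin_not _

/-- Monotonicity of the partition function in the field. -/
lemma ising_Z_mono (J : Sym2 V → ℝ) {h : ℝ} (hh : 0 ≤ h) :
    (∑ σ : V → Bool, isingWeight J (fun _ => 0) E σ) ≤
      ∑ σ : V → Bool, isingWeight J (fun _ => h) E σ := by
  classical
  have hrw : ∀ σ : V → Bool, isingWeight J (fun _ => h) E σ =
      isingWeight J (fun _ => 0) E σ * Real.exp (h * ∑ v, spin (σ v)) :=
    fun σ => isingWeight_field E J h σ
  have hneg : (∑ σ : V → Bool, isingWeight J (fun _ => 0) E σ *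
        Real.exp (h * ∑ v, spin (σ v))) =
      ∑ σ : V → Bool, isingWeight J (fun _ => 0) E σ *
        Real.exp (-(h * ∑ v, spin (σ v))) := by
    have hbij : Function.Bijective (fun σ : V → Bool => fun v => !(σ v)) := by
      constructor
      · intro a b hab
        funext v
        have := congrFun hab v
        simpa using this
      · intro τ
        exact ⟨fun v => !(τ v), by funext v; simp⟩
    refine Fintype.sum_bijective _ hbij _ _ fun σ => ?_
    rw [isingWeight_neg_invariant, spin_sum_neg, mul_neg, neg_neg]
  have key : ∀ σ : V → Bool, 2 * isingWeight J (fun _ => 0) E σ ≤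
      isingWeight J (fun _ => 0) E σ * Real.exp (h * ∑ v, spin (σ v)) +
      isingWeight J (fun _ => 0) E σ * Real.exp (-(h * ∑ v, spin (σ v))) := by
    intro σ
    have hW := (isingWeight_pos E J (fun _ => 0) σ).le
    have he : 2 ≤ Real.exp (h * ∑ v, spin (σ v)) + Real.exp (-(h * ∑ v, spin (σ v))) := by
      have l1 := Real.add_one_le_exp (h * ∑ v, spin (σ v))
      have l2 := Real.add_one_le_exp (-(h * ∑ v, spin (σ v)))
      linarith
    nlinarith
  have hsum := Finset.sum_le_sum
    (fun σ (_ : σ ∈ (Finset.univ : Finset (V → Bool))) => key σ)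
  rw [Finset.sum_add_distrib, ← hneg, ← Finset.mul_sum] at hsum
  simp_rw [hrw]
  linarith

end Ising

end FK

set_option linter.unusedVariables false
set_option linter.unusedSectionVars false
set_option maxHeartbeats 1000000

/-- moment generating function bound for the largest cluster
in a constant magnetic field `h ≥ 0`. -/
theorem mgf_largest_cluster_with_field
    {V : Type*} [Fintype V] [DecidableEq V] [Nonempty V]
    (E : Finset (Sym2 V)) (hE : ∀ e ∈ E, ¬ e.IsDiag)
    (J : Sym2 V → ℝ) (hJ : ∀ e ∈ E, 0 ≤ J e)
    (h : ℝ) (hh : 0 ≤ h) (t : ℝ) (ht : 0 ≤ t) :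
    (∑ ωi : FK.Config E, FK.fkMarginal J (fun _ => h) E ωi *
        Real.exp (t * (((FK.clusters E ωi).sup Finset.card : ℕ) : ℝ)))
      ≤ 2 * ∑ σ : V → Bool, FK.isingProb J (fun _ => 0) E σ *
            Real.exp ((t + h) * ∑ v, FK.spin (σ v)) := by
  classical
  open FK in
  set Hh : V → ℝ := fun _ => h with hHh
  have hHnn : ∀ v : V, 0 ≤ Hh v := fun _ => hh
  set Zhat : ℝ := ∑ ω' : FK.GConfig E, FK.fkWeight J Hh E ω' with hZhat
  set Z0 : ℝ := ∑ σ' : V → Bool, FK.isingWeight J (fun _ => 0) E σ' with hZ0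
  set c : ℝ := Real.exp (-(∑ e ∈ E, J e) - ∑ v, Hh v) with hc
  set T : ℝ := ∑ σ : V → Bool, FK.isingWeight J (fun _ => 0) E σ *
    Real.exp ((t + h) * ∑ v, FK.spin (σ v)) with hT
  have hZ0pos : 0 < Z0 :=
    Finset.sum_pos (fun σ _ => FK.isingWeight_pos E J _ σ) Finset.univ_nonempty
  have hTpos : 0 < T :=
    Finset.sum_pos (fun σ _ => mul_pos (FK.isingWeight_pos E J _ σ) (Real.exp_pos _))
      Finset.univ_nonempty
  have hcpos : 0 < c := Real.exp_pos _
  -- positivity of the FK partition function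
  have hZhatpos : 0 < Zhat := by
    refine Finset.sum_pos' (fun ω _ => FK.fkWeight_nonneg E hJ hHnn ω) ?_
    refine ⟨((fun _ => false), (fun _ => false)), Finset.mem_univ _, ?_⟩
    rw [FK.fkWeight_eq]
    have h1 : (0:ℝ) < FK.edgeWeight J E (fun _ => false) := by
      refine Finset.prod_pos fun e _ => ?_
      rw [if_neg (by simp)]
      exact Real.exp_pos _
    have h2 : (0:ℝ) < FK.ghostProd Hh (fun _ => false) := by
      refine Finset.prod_pos fun v _ => ?_
      rw [if_neg (by simp)]
      exact Real.exp_pos _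
    positivity
  -- rewrite the LHS
  have hLHS : (∑ ωi : FK.Config E, FK.fkMarginal J Hh E ωi *
      Real.exp (t * (((FK.clusters E ωi).sup Finset.card : ℕ) : ℝ))) =
      (∑ ω : FK.GConfig E, FK.fkWeight J Hh E ω *
        Real.exp (t * (((FK.clusters E ω.1).sup Finset.card : ℕ) : ℝ))) / Zhat := by
    rw [Fintype.sum_prod_type, Finset.sum_div]
    refine Finset.sum_congr rfl fun ωi _ => ?_
    rw [FK.fkMarginal]
    simp_rw [FK.fkProb]
    rw [← hZhat, ← Finset.sum_div, div_mul_eq_mul_div, Finset.sum_mul]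
  -- the per-configuration key inequality summed over bonds
  have hnum : (∑ ω : FK.GConfig E, FK.fkWeight J Hh E ω *
      Real.exp (t * (((FK.clusters E ω.1).sup Finset.card : ℕ) : ℝ))) ≤
      2 * (c * T) := by
    rw [hT]
    have step1 : (∑ ω : FK.GConfig E, FK.fkWeight J Hh E ω *
        Real.exp (t * (((FK.clusters E ω.1).sup Finset.card : ℕ) : ℝ))) ≤
        ∑ ω : FK.GConfig E, 2 * ∑ σ : V → Bool,
          FK.esWeight J Hh E (σ, ω) * Real.exp (t * ∑ v, FK.spin (σ v)) :=
      Finset.sum_le_sum fun ω _ => FK.key_ineq E hJ hHnn ht ω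
    have step2 : (∑ ω : FK.GConfig E, 2 * ∑ σ : V → Bool,
        FK.esWeight J Hh E (σ, ω) * Real.exp (t * ∑ v, FK.spin (σ v))) =
        2 * ∑ σ : V → Bool, (∑ ω : FK.GConfig E, FK.esWeight J Hh E (σ, ω)) *
          Real.exp (t * ∑ v, FK.spin (σ v)) := by
      rw [← Finset.mul_sum]
      congr 1
      rw [Finset.sum_comm]
      exact Finset.sum_congr rfl fun σ _ => (Finset.sum_mul _ _ _).symm
    have step3 : ∀ σ : V → Bool,
        (∑ ω : FK.GConfig E, FK.esWeight J Hh E (σ, ω)) *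
          Real.exp (t * ∑ v, FK.spin (σ v)) =
        c * (FK.isingWeight J (fun _ => 0) E σ *
          Real.exp ((t + h) * ∑ v, FK.spin (σ v))) := by
      intro σ
      rw [FK.sum_esWeight_bonds, FK.isingWeight_field E J h σ, ← hc]
      rw [mul_assoc, mul_assoc, ← Real.exp_add]
      congr 2
      ring
    calc (∑ ω : FK.GConfig E, FK.fkWeight J Hh E ω *
        Real.exp (t * (((FK.clusters E ω.1).sup Finset.card : ℕ) : ℝ)))
        ≤ ∑ ω : FK.GConfig E, 2 * ∑ σ : V → Bool,
            FK.esWeight J Hh E (σ, ω) * Real.exp (t * ∑ v, FK.spin (σ v)) := step1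
      _ = 2 * ∑ σ : V → Bool, (∑ ω : FK.GConfig E, FK.esWeight J Hh E (σ, ω)) *
            Real.exp (t * ∑ v, FK.spin (σ v)) := step2
      _ = 2 * (c * ∑ σ : V → Bool, FK.isingWeight J (fun _ => 0) E σ *
            Real.exp ((t + h) * ∑ v, FK.spin (σ v))) := by
          congr 1
          rw [Finset.mul_sum]
          exact Finset.sum_congr rfl fun σ _ => step3 σ
  -- partition function comparison: c * Z0 ≤ Zhat
  have hZcomp : c * Z0 ≤ Zhat := by
    have hstep : ∑ σ : V → Bool, (∑ ω : FK.GConfig E, FK.esWeight J Hh E (σ, ω)) ≤ Zhat := by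
      rw [Finset.sum_comm]
      exact Finset.sum_le_sum fun ω _ => FK.sum_esWeight_le_fkWeight E hJ hHnn ω
    have heq : ∑ σ : V → Bool, (∑ ω : FK.GConfig E, FK.esWeight J Hh E (σ, ω)) =
        c * ∑ σ : V → Bool, FK.isingWeight J Hh E σ := by
      rw [Finset.mul_sum]
      exact Finset.sum_congr rfl fun σ _ => FK.sum_esWeight_bonds E J Hh σ
    have hmono := FK.ising_Z_mono E J hh
    calc c * Z0 ≤ c * ∑ σ : V → Bool, FK.isingWeight J Hh E σ :=
          mul_le_mul_of_nonneg_left hmono hcpos.le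
      _ = ∑ σ : V → Bool, (∑ ω : FK.GConfig E, FK.esWeight J Hh E (σ, ω)) := heq.symm
      _ ≤ Zhat := hstep
  -- rewrite the RHS
  have hRHS : (2 * ∑ σ : V → Bool, FK.isingProb J (fun _ => 0) E σ *
      Real.exp ((t + h) * ∑ v, FK.spin (σ v))) = 2 * (T / Z0) := by
    congr 1
    rw [Finset.sum_div]
    refine Finset.sum_congr rfl fun σ _ => ?_
    rw [FK.isingProb, ← hZ0, div_mul_eq_mul_div]
  rw [hLHS, hRHS]
  have hfinal : (2 * (c * T)) / Zhat ≤ 2 * (T / Z0) := by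
    rw [div_le_iff₀ hZhatpos, ← sub_nonneg]
    have hkey : 2 * (T / Z0) * Zhat - 2 * (c * T) = (2 * T / Z0) * (Zhat - c * Z0) := by
      field_simp
    rw [hkey]
    apply mul_nonneg (div_nonneg (by linarith) hZ0pos.le) (by linarith)
  calc (∑ ω : FK.GConfig E, FK.fkWeight J Hh E ω *
      Real.exp (t * (((FK.clusters E ω.1).sup Finset.card : ℕ) : ℝ))) / Zhat
      ≤ (2 * (c * T)) / Zhat :=
        (div_le_div_iff_of_pos_right hZhatpos).2 hnum
    _ ≤ 2 * (T / Z0) := hfinal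
end
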